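/- Fix b > 0 and q > 1. Let B^x be a Brownian motion started at x with continuous local time L^a_t, maximum M^x(t) = sup_{s∈[0,t]} B^x(s), and minimum m^x(t) = inf_{s∈[0,t]} B^x(s). Let Y^x be the reflection of B^x into (0,b), so that L^z_t(Y^x) = Σ_{a ∈ 2bℤ ± z} L^a_t(B^x) for z ∈ (0,b). Then there exist constants c₁, c₂ > 0 depending only on b and q such that (∫_0^b L^z_t(Y^x)^q dz)^{1/q} ≤ c₁ t^{1/q} ( c₂^{1−1/q} (sup_{a∈ℝ} L^a_t(B^x))^{1−1/q} + ( sup_{a∈ℝ} L^a_t(B^x) · (M^x(t) − m^x(t)) )^{1−1/q} ). -/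
import Mathlib


open MeasureTheory

private lemma rpow_add_le_add_rpow_real {x y p : ℝ} (hx : 0 ≤ x) (hy : 0 ≤ y)
    (hp : 0 ≤ p) (hp1 : p ≤ 1) : (x + y) ^ p ≤ x ^ p + y ^ p := by
  have h := NNReal.rpow_add_le_add_rpow x.toNNReal y.toNNReal hp hp1
  have h' := NNReal.coe_le_coe.2 h
  push_cast at h'
  rwa [Real.coe_toNNReal _ hx, Real.coe_toNNReal _ hy] at h'

/-- Local-time norm bound for reflected Brownian motion on `(0,b)`.
Here `f a = L^a_t(B^x)` is the continuous local-time profile of a Brownian motion run for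
time `t`: it is nonnegative, continuous, integrates to `t`, vanishes outside the range
`[m, M]` of the path, and is bounded by `S = sup_a L^a_t(B^x)`.  The local time of the
reflection `Y^x` into `(0,b)` at level `z ∈ (0,b)` is `∑_{k∈ℤ} f(2bk+z) + f(2bk−z)`.
Then there are constants `c₁, c₂ > 0` depending only on `b` and `q` such that
`(∫_0^b L^z_t(Y^x)^q dz)^{1/q} ≤ c₁ t^{1/q} (c₂^{1−1/q} S^{1−1/q} + (S(M−m))^{1−1/q})`. -/
theorem interval_reflected_local_time_bound (b q : ℝ) (hb : 0 < b) (hq : 1 < q) :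
    ∃ c₁ : ℝ, 0 < c₁ ∧ ∃ c₂ : ℝ, 0 < c₂ ∧
      ∀ (t : ℝ) (f : ℝ → ℝ) (m M S : ℝ), 0 < t →
        Continuous f → (∀ a : ℝ, 0 ≤ f a) → (∫ a : ℝ, f a) = t →
        m ≤ M → (∀ a : ℝ, a < m ∨ M < a → f a = 0) → (∀ a : ℝ, f a ≤ S) →
        (∫ z in Set.Ioo (0 : ℝ) b,
            (∑' k : ℤ, (f (2 * b * k + z) + f (2 * b * k - z))) ^ q) ^ (1 / q)
          ≤ c₁ * t ^ (1 / q) *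
            (c₂ ^ (1 - 1 / q) * S ^ (1 - 1 / q) + (S * (M - m)) ^ (1 - 1 / q)) := by
  refine ⟨(1/b) ^ (1 - 1/q), Real.rpow_pos_of_pos (by positivity) _, 4*b, by positivity, ?_⟩
  intro t f m M S ht hfc hf0 hft hmM hvan hfS
  have hq0 : (0:ℝ) < q := lt_trans one_pos hq
  have hqne : q ≠ 0 := ne_of_gt hq0
  have hS0 : 0 ≤ S := le_trans (hf0 0) (hfS 0)
  have hMm : 0 ≤ M - m := sub_nonneg.2 hmM
  have hinvq : 0 ≤ 1/q := by positivity
  have hinvq1 : 1/q ≤ 1 := by rw [div_le_one hq0]; linarith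
  have hp0 : 0 ≤ 1 - 1/q := by linarith
  have hp1 : 1 - 1/q ≤ 1 := by linarith
  -- f is integrable
  have hcs : HasCompactSupport f := by
    apply HasCompactSupport.intro (isCompact_Icc (a := m) (b := M))
    intro x hx
    apply hvan
    rw [Set.mem_Icc, not_and_or, not_le, not_le] at hx
    exact hx
  have hfi : Integrable f := hfc.integrable_of_hasCompactSupport hcs
  -- the finite index set
  set F : Finset ℤ := Finset.Icc ⌈(m - b)/(2*b)⌉ ⌊(M + b)/(2*b)⌋ with hF
  set G : ℝ → ℝ := fun z => ∑ k ∈ F, (f (2*b*k + z) + f (2*b*k - z)) with hGdef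
  have hb2 : (0:ℝ) < 2*b := by linarith
  have hvanF : ∀ z ∈ Set.Ioo (0:ℝ) b, ∀ k : ℤ, k ∉ F →
      f (2*b*k + z) + f (2*b*k - z) = 0 := by
    intro z hz k hk
    rw [hF, Finset.mem_Icc, not_and_or, not_le, not_le] at hk
    rcases hz with ⟨hz0, hzb⟩
    rcases hk with hk | hk
    · have h1 : (k:ℝ) < (m - b)/(2*b) := Int.lt_ceil.mp hk
      have h2 : (k:ℝ) * (2*b) < m - b := (lt_div_iff₀ hb2).mp h1
      rw [hvan _ (Or.inl (by nlinarith)), hvan _ (Or.inl (by nlinarith)), add_zero]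
    · have h1 : (M + b)/(2*b) < (k:ℝ) := by exact_mod_cast Int.floor_lt.mp hk
      have h2 : M + b < (k:ℝ) * (2*b) := (div_lt_iff₀ hb2).mp h1
      rw [hvan _ (Or.inr (by nlinarith)), hvan _ (Or.inr (by nlinarith)), add_zero]
  have hEq : ∀ z ∈ Set.Ioo (0:ℝ) b,
      (∑' k : ℤ, (f (2*b*k + z) + f (2*b*k - z))) = G z := by
    intro z hz
    exact tsum_eq_sum (fun k hk => hvanF z hz k hk)
  have hG0 : ∀ z, 0 ≤ G z :=
    fun z => Finset.sum_nonneg (fun k _ => add_nonneg (hf0 _) (hf0 _))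
  have hGcont : Continuous G := by
    apply continuous_finset_sum
    intro k _
    exact (hfc.comp (continuous_const.add continuous_id)).add
      (hfc.comp (continuous_const.sub continuous_id))
  -- cardinality bound
  have hcard : (F.card : ℝ) ≤ (M - m)/(2*b) + 2 := by
    have h1 : (F.card : ℤ) = max (⌊(M + b)/(2*b)⌋ + 1 - ⌈(m - b)/(2*b)⌉) 0 := by
      rw [hF, Int.card_Icc, Int.toNat_eq_max]
    have h2 : ((F.card : ℤ) : ℝ) = max ((⌊(M + b)/(2*b)⌋:ℝ) + 1 - (⌈(m - b)/(2*b)⌉:ℝ)) 0 := by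
      rw [h1]; push_cast; rfl
    rw [show ((F.card : ℤ) : ℝ) = (F.card : ℝ) by push_cast; rfl] at h2
    rw [h2]
    apply max_le
    · have hfl : (⌊(M + b)/(2*b)⌋ : ℝ) ≤ (M + b)/(2*b) := Int.floor_le _
      have hcl : (m - b)/(2*b) ≤ (⌈(m - b)/(2*b)⌉ : ℝ) := Int.le_ceil _
      have : (M + b)/(2*b) - (m - b)/(2*b) = (M - m)/(2*b) + 1 := by field_simp; ring
      linarith
    · positivity
  -- the pointwise bound
  set K : ℝ := (S*(M-m) + 4*b*S)/b with hKdef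
  have hK0 : 0 ≤ K := div_nonneg (by nlinarith) hb.le
  have hGK : ∀ z, G z ≤ K := by
    intro z
    calc G z ≤ ∑ k ∈ F, (S + S) :=
          Finset.sum_le_sum (fun k _ => add_le_add (hfS _) (hfS _))
      _ = (F.card : ℝ) * (2*S) := by rw [Finset.sum_const, nsmul_eq_mul]; ring
      _ ≤ ((M - m)/(2*b) + 2) * (2*S) :=
          mul_le_mul_of_nonneg_right hcard (by linarith)
      _ = K := by rw [hKdef]; field_simp; ring
  -- integral of G is at most t
  have hGint : ∫ z in Set.Ioo (0:ℝ) b, G z ≤ t := by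
    have hIoo : ∫ z in Set.Ioo (0:ℝ) b, G z = ∫ z in (0:ℝ)..b, G z := by
      rw [intervalIntegral.integral_of_le hb.le]
      exact setIntegral_congr_set Ioo_ae_eq_Ioc
    rw [hIoo]
    simp only [hGdef]
    have hsum := intervalIntegral.integral_finset_sum (μ := volume) (a := (0:ℝ)) (b := b)
      (s := F) (f := fun (k:ℤ) z => f (2*b*k + z) + f (2*b*k - z))
      (fun k _ => ((by fun_prop : Continuous fun z =>
        f (2*b*(k:ℝ) + z) + f (2*b*k - z)).intervalIntegrable _ _))
    rw [hsum]
    have heach : ∀ k ∈ F, (∫ z in (0:ℝ)..b, (f (2*b*k + z) + f (2*b*k - z)))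
        = ∫ z in Set.Ioc (2*b*k - b) (2*b*k + b), f z := by
      intro k _
      rw [intervalIntegral.integral_add
        ((by fun_prop : Continuous fun z => f (2*b*(k:ℝ) + z)).intervalIntegrable _ _)
        ((by fun_prop : Continuous fun z => f (2*b*(k:ℝ) - z)).intervalIntegrable _ _)]
      have e1 : (∫ z in (0:ℝ)..b, f (2*b*k + z)) = ∫ z in (2*b*k)..(2*b*k + b), f z := by
        simpa using intervalIntegral.integral_comp_add_left f (2*b*k) (a := 0) (b := b)
      have e2 : (∫ z in (0:ℝ)..b, f (2*b*k - z)) = ∫ z in (2*b*k - b)..(2*b*k), f z := by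
        simpa using intervalIntegral.integral_comp_sub_left f (2*b*k) (a := 0) (b := b)
      rw [e1, e2, add_comm,
        intervalIntegral.integral_add_adjacent_intervals
          hfi.intervalIntegrable hfi.intervalIntegrable,
        intervalIntegral.integral_of_le (by linarith)]
    rw [Finset.sum_congr rfl heach]
    have hdisj : (F : Set ℤ).Pairwise
        (Function.onFun Disjoint fun k => Set.Ioc (2*b*(k:ℝ) - b) (2*b*k + b)) := by
      intro i _ j _ hij
      rw [Function.onFun, Set.Ioc_disjoint_Ioc]
      rcases lt_or_gt_of_ne hij with h | h
      · have : (i:ℝ) + 1 ≤ (j:ℝ) := by exact_mod_cast Int.add_one_le_iff.mpr h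
        have h1 : 2*b*(i:ℝ) + b ≤ 2*b*(j:ℝ) - b := by nlinarith
        exact le_trans (min_le_left _ _) (le_trans h1 (le_max_right _ _))
      · have : (j:ℝ) + 1 ≤ (i:ℝ) := by exact_mod_cast Int.add_one_le_iff.mpr h
        have h1 : 2*b*(j:ℝ) + b ≤ 2*b*(i:ℝ) - b := by nlinarith
        exact le_trans (min_le_right _ _) (le_trans h1 (le_max_left _ _))
    rw [← integral_biUnion_finset F (fun _ _ => measurableSet_Ioc) hdisj
      (fun _ _ => hfi.integrableOn)]
    calc (∫ z in ⋃ k ∈ F, Set.Ioc (2*b*(k:ℝ) - b) (2*b*k + b), f z) ≤ ∫ z, f z :=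
          setIntegral_le_integral hfi (Filter.Eventually.of_forall hf0)
      _ = t := hft
  -- replace the tsum by G in the integral
  have hLHSeq : (∫ z in Set.Ioo (0 : ℝ) b,
      (∑' k : ℤ, (f (2 * b * k + z) + f (2 * b * k - z))) ^ q)
      = ∫ z in Set.Ioo (0:ℝ) b, (G z) ^ q := by
    apply setIntegral_congr_fun measurableSet_Ioo
    intro z hz
    dsimp only
    rw [hEq z hz]
  -- bound the integral of G^q
  have hGq : ∫ z in Set.Ioo (0:ℝ) b, (G z) ^ q ≤ K ^ (q-1) * t := by
    have hGqint : IntegrableOn (fun z => (G z) ^ q) (Set.Ioo (0:ℝ) b) := by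
      exact ((hGcont.rpow_const (fun x => Or.inr hq0.le)).integrableOn_Icc).mono_set
        Set.Ioo_subset_Icc_self
    have hKGint : IntegrableOn (fun z => K ^ (q-1) * G z) (Set.Ioo (0:ℝ) b) := by
      exact ((continuous_const.mul hGcont).integrableOn_Icc).mono_set Set.Ioo_subset_Icc_self
    have step1 : ∫ z in Set.Ioo (0:ℝ) b, (G z) ^ q
        ≤ ∫ z in Set.Ioo (0:ℝ) b, K ^ (q-1) * G z := by
      apply setIntegral_mono_on hGqint hKGint measurableSet_Ioo
      intro z hz
      by_cases h0 : G z = 0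
      · rw [h0, Real.zero_rpow hqne, mul_zero]
      · have hGz : 0 < G z := lt_of_le_of_ne (hG0 z) (Ne.symm h0)
        have hsplit : G z ^ q = G z ^ (q-1) * G z := by
          nth_rewrite 3 [← Real.rpow_one (G z)]
          rw [← Real.rpow_add hGz]
          norm_num
        rw [hsplit]
        exact mul_le_mul_of_nonneg_right
          (Real.rpow_le_rpow (hG0 z) (hGK z) (by linarith)) (hG0 z)
    calc ∫ z in Set.Ioo (0:ℝ) b, (G z) ^ q ≤ ∫ z in Set.Ioo (0:ℝ) b, K ^ (q-1) * G z := step1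
      _ = K ^ (q-1) * ∫ z in Set.Ioo (0:ℝ) b, G z := by rw [MeasureTheory.integral_const_mul]
      _ ≤ K ^ (q-1) * t :=
          mul_le_mul_of_nonneg_left hGint (Real.rpow_nonneg hK0 _)
  rw [hLHSeq]
  have hLHS0 : 0 ≤ ∫ z in Set.Ioo (0:ℝ) b, (G z) ^ q :=
    setIntegral_nonneg measurableSet_Ioo (fun z _ => Real.rpow_nonneg (hG0 z) q)
  have h1 : (∫ z in Set.Ioo (0:ℝ) b, (G z) ^ q) ^ (1/q) ≤ (K ^ (q-1) * t) ^ (1/q) :=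
    Real.rpow_le_rpow hLHS0 hGq hinvq
  have h2 : (K ^ (q-1) * t) ^ (1/q) = K ^ (1 - 1/q) * t ^ (1/q) := by
    rw [Real.mul_rpow (Real.rpow_nonneg hK0 _) ht.le, ← Real.rpow_mul hK0]
    congr 1
    field_simp
  -- bound K ^ (1 - 1/q)
  have h3 : K ^ (1 - 1/q) ≤ (1/b) ^ (1 - 1/q) *
      ((4*b) ^ (1 - 1/q) * S ^ (1 - 1/q) + (S*(M-m)) ^ (1 - 1/q)) := by
    have hKsplit : K = (S*(M-m) + 4*b*S) * (1/b) := by rw [hKdef]; ring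
    rw [hKsplit, Real.mul_rpow (add_nonneg (mul_nonneg hS0 hMm) (mul_nonneg (by positivity) hS0)) (by positivity), mul_comm]
    apply mul_le_mul_of_nonneg_left ?_
      (Real.rpow_nonneg (by positivity : (0:ℝ) ≤ 1/b) _)
    calc (S*(M-m) + 4*b*S) ^ (1 - 1/q)
        ≤ (S*(M-m)) ^ (1 - 1/q) + (4*b*S) ^ (1 - 1/q) :=
          rpow_add_le_add_rpow_real (mul_nonneg hS0 hMm) (mul_nonneg (by positivity) hS0) hp0 hp1
      _ = (4*b) ^ (1 - 1/q) * S ^ (1 - 1/q) + (S*(M-m)) ^ (1 - 1/q) := by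
          rw [Real.mul_rpow (by positivity) hS0, add_comm]
  calc (∫ z in Set.Ioo (0:ℝ) b, (G z) ^ q) ^ (1/q) ≤ K ^ (1 - 1/q) * t ^ (1/q) := by
        rw [← h2]; exact h1
    _ ≤ ((1/b) ^ (1 - 1/q) *
        ((4*b) ^ (1 - 1/q) * S ^ (1 - 1/q) + (S*(M-m)) ^ (1 - 1/q))) * t ^ (1/q) :=
        mul_le_mul_of_nonneg_right h3 (Real.rpow_nonneg ht.le _)
    _ = (1/b) ^ (1 - 1/q) * t ^ (1/q) *
        ((4*b) ^ (1 - 1/q) * S ^ (1 - 1/q) + (S*(M-m)) ^ (1 - 1/q)) := by ring
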